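/- For any ring R and natural number n ≥ 1, tensoring with the (M_n(R), R)-bimodule Rⁿ induces an isomorphism K₀(R) ≅ K₀(M_n(R)) (Morita equivalence for K₀). -/

import Mathlib

universe u

/-- A bundled finitely generated projective `R`-module. -/
structure FGProj (R : Type u) [Ring R] : Type (u + 1) where
  carrier : Type u
  [isAddCommGroup : AddCommGroup carrier]
  [isModule : Module R carrier]
  [isFinite : Module.Finite R carrier]
  [isProjective : Module.Projective R carrier]

attribute [instance] FGProj.isAddCommGroup FGProj.isModule FGProj.isFinite FGProj.isProjective

instance (R : Type u) [Ring R] : CoeSort (FGProj R) (Type u) := ⟨FGProj.carrier⟩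

/-- The relations defining the projective class group: `[M] + [N] = [P]` whenever
`M ⊕ N ≅ P`. -/
def K0Rels (R : Type u) [Ring R] : AddSubgroup (FreeAbelianGroup (FGProj R)) :=
  AddSubgroup.closure
    {x | ∃ M N P : FGProj R, Nonempty ((M × N : Type u) ≃ₗ[R] P) ∧
      x = FreeAbelianGroup.of M + FreeAbelianGroup.of N - FreeAbelianGroup.of P}

/-- The projective class group `K₀(R)`. -/
abbrev K0 (R : Type u) [Ring R] :=
  FreeAbelianGroup (FGProj R) ⧸ K0Rels R

/-- The class `[M] ∈ K₀(R)` of a finitely generated projective module. -/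
def K0.mk {R : Type u} [Ring R] (M : FGProj R) : K0 R :=
  QuotientAddGroup.mk (FreeAbelianGroup.of M)

section MatrixModule

variable {R : Type u} [Ring R] {n : ℕ} {M : Type u} [AddCommGroup M] [Module R M]

/-- The action of the matrix ring `Mₙ(R)` on `Mⁿ` by matrix multiplication. -/
instance matrixSMul : SMul (Matrix (Fin n) (Fin n) R) (Fin n → M) :=
  ⟨fun A v i => ∑ j, A i j • v j⟩

/-- `Mⁿ` as a module over the matrix ring `Mₙ(R)`; for `M = P` an `R`-module this is the
module `Rⁿ ⊗_R P ≅ Pⁿ` obtained by tensoring with the `(Mₙ(R), R)`-bimodule `Rⁿ`. -/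
instance matrixModule : Module (Matrix (Fin n) (Fin n) R) (Fin n → M) where
  one_smul v := by
    funext i
    show (∑ j, (1 : Matrix (Fin n) (Fin n) R) i j • v j) = v i
    simp [Matrix.one_apply, ite_smul]
  mul_smul A B v := by
    funext i
    show (∑ j, (A * B) i j • v j) = ∑ j, A i j • ∑ l, B j l • v l
    simp only [Matrix.mul_apply, Finset.sum_smul, Finset.smul_sum, mul_smul]
    exact Finset.sum_comm
  smul_zero A := by
    funext i
    show (∑ j, A i j • (0 : M)) = 0
    simp
  smul_add A v w := by
    funext i
    show (∑ j, A i j • (v j + w j)) = (∑ j, A i j • v j) + ∑ j, A i j • w j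
    simp [smul_add, Finset.sum_add_distrib]
  add_smul A B v := by
    funext i
    show (∑ j, (A + B) i j • v j) = (∑ j, A i j • v j) + ∑ j, B i j • v j
    simp [Matrix.add_apply, add_smul, Finset.sum_add_distrib]
  zero_smul v := by
    funext i
    show (∑ j, (0 : Matrix (Fin n) (Fin n) R) i j • v j) = 0
    simp

end MatrixModule

namespace K0Morita

open Matrix

section Basic

variable {R : Type u} [Ring R]

/-- Transfer f.g. + projective along a split surjection. -/
theorem finite_of_split {A B : Type u} [AddCommGroup A] [Module R A]
    [AddCommGroup B] [Module R B] [Module.Finite R A]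
    (π : A →ₗ[R] B) (σ : B →ₗ[R] A) (h : π.comp σ = LinearMap.id) :
    Module.Finite R B :=
  Module.Finite.of_surjective π (fun b => ⟨σ b, by
    have := LinearMap.congr_fun h b; simpa using this⟩)

theorem exists_split (B : Type u) [AddCommGroup B] [Module R B]
    [Module.Finite R B] [Module.Projective R B] :
    ∃ (k : ℕ) (π : (Fin k → R) →ₗ[R] B) (σ : B →ₗ[R] (Fin k → R)),
      π.comp σ = LinearMap.id := by
  obtain ⟨k, f, hf⟩ := Module.Finite.exists_fin' R B
  obtain ⟨σ, hσ⟩ := Module.projective_lifting_property f LinearMap.id hf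
  exact ⟨k, f, σ, hσ⟩

theorem projective_pi {ι : Type} [Fintype ι] [DecidableEq ι]
    (A : ι → Type u) [∀ i, AddCommGroup (A i)] [∀ i, Module R (A i)]
    [∀ i, Module.Projective R (A i)] : Module.Projective R (∀ i, A i) :=
  haveI : Module.Projective R (DirectSum ι fun i => A i) :=
    inferInstanceAs (Module.Projective R (Π₀ i, A i))
  Module.Projective.of_equiv (DirectSum.linearEquivFunOnFintype R ι A)

end Basic

section K0Lemmas

variable {R : Type u} [Ring R]

/-- The product of two f.g. projective modules, bundled. -/
def FGProj.prod (A B : FGProj R) : FGProj R := ⟨(A × B : Type u)⟩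

theorem K0.mk_add (A B C : FGProj R) (e : (A × B : Type u) ≃ₗ[R] C) :
    K0.mk A + K0.mk B = K0.mk C := by
  have h : FreeAbelianGroup.of A + FreeAbelianGroup.of B - FreeAbelianGroup.of C
      ∈ K0Rels R := AddSubgroup.subset_closure ⟨A, B, C, ⟨e⟩, rfl⟩
  have h0 : (QuotientAddGroup.mk (FreeAbelianGroup.of A + FreeAbelianGroup.of B -
      FreeAbelianGroup.of C) : K0 R) = 0 := (QuotientAddGroup.eq_zero_iff _).mpr h
  have : K0.mk A + K0.mk B - K0.mk C = 0 := h0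
  linear_combination (norm := abel) this

theorem K0.mk_congr (A B : FGProj R) (e : (A : Type u) ≃ₗ[R] B) :
    K0.mk A = K0.mk B := by
  have h1 : K0.mk A + K0.mk B = K0.mk (FGProj.prod B B) :=
    K0.mk_add A B _ (e.prodCongr (LinearEquiv.refl R (B : Type u)))
  have h2 : K0.mk B + K0.mk B = K0.mk (FGProj.prod B B) :=
    K0.mk_add B B _ (LinearEquiv.refl R _)
  have := h1.trans h2.symm
  exact add_right_cancel this

end K0Lemmas

end K0Morita
namespace K0Morita

open Matrix

section MatSide

variable {R : Type u} [Ring R] {n : ℕ} [NeZero n]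

theorem matrix_smul_apply {M : Type u} [AddCommGroup M] [Module R M]
    (A : Matrix (Fin n) (Fin n) R) (v : Fin n → M) (i : Fin n) :
    (A • v) i = ∑ j, A i j • v j := rfl

/-- Functoriality of `P ↦ Pⁿ`. -/
def matMap {P P' : Type u} [AddCommGroup P] [Module R P] [AddCommGroup P'] [Module R P']
    (f : P →ₗ[R] P') : (Fin n → P) →ₗ[Matrix (Fin n) (Fin n) R] (Fin n → P') where
  toFun v := fun i => f (v i)
  map_add' v w := by funext i; simp
  map_smul' A v := by
    funext i
    simp only [RingHom.id_apply, matrix_smul_apply, map_sum]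
    exact Finset.sum_congr rfl fun j _ => f.map_smul _ _

theorem matMap_comp_apply {P P' P'' : Type u} [AddCommGroup P] [Module R P]
    [AddCommGroup P'] [Module R P'] [AddCommGroup P''] [Module R P'']
    (f : P →ₗ[R] P') (g : P' →ₗ[R] P'') (v : Fin n → P) :
    matMap g (matMap f v) = matMap (g.comp f) v := rfl

/-- `P ↦ Pⁿ` on linear equivalences. -/
def matEquiv {P P' : Type u} [AddCommGroup P] [Module R P] [AddCommGroup P'] [Module R P']
    (e : P ≃ₗ[R] P') : (Fin n → P) ≃ₗ[Matrix (Fin n) (Fin n) R] (Fin n → P') :=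
  LinearEquiv.ofLinear (matMap e.toLinearMap) (matMap e.symm.toLinearMap)
    (by ext v i; simp [matMap]) (by ext v i; simp [matMap])

/-- `(P × P')ⁿ ≅ Pⁿ × P'ⁿ` as `Mₙ(R)`-modules. -/
def matProd (P P' : Type u) [AddCommGroup P] [Module R P] [AddCommGroup P'] [Module R P'] :
    (Fin n → (P × P')) ≃ₗ[Matrix (Fin n) (Fin n) R] ((Fin n → P) × (Fin n → P')) where
  toFun v := (fun i => (v i).1, fun i => (v i).2)
  invFun p := fun i => (p.1 i, p.2 i)
  left_inv v := rfl
  right_inv p := rfl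
  map_add' v w := rfl
  map_smul' A v := by
    refine Prod.ext ?_ ?_ <;> funext i <;>
      simp [matrix_smul_apply, Prod.fst_sum, Prod.snd_sum]

/-- `(Rᵏ)ⁿ ≅ (Rⁿ)ᵏ` as `Mₙ(R)`-modules, where the right side is a product of column
modules. -/
def swapEquiv (k : ℕ) :
    (Fin n → (Fin k → R)) ≃ₗ[Matrix (Fin n) (Fin n) R] (Fin k → (Fin n → R)) where
  toFun v := fun l i => v i l
  invFun w := fun i l => w l i
  left_inv v := rfl
  right_inv w := rfl
  map_add' v w := rfl
  map_smul' A v := by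
    funext l i
    show (A • v) i l = (A • fun i' => v i' l) i
    simp [matrix_smul_apply, Finset.sum_apply]

/-- Projection from `Mₙ(R)` onto its first column. -/
def colProj : Matrix (Fin n) (Fin n) R →ₗ[Matrix (Fin n) (Fin n) R] (Fin n → R) where
  toFun B := fun i => B i 0
  map_add' B C := rfl
  map_smul' A B := by
    funext i
    show (A * B) i 0 = ∑ j, A i j • B j 0
    simp [Matrix.mul_apply]

/-- Inclusion of the column module into `Mₙ(R)` as the first column. -/
def colIncl : (Fin n → R) →ₗ[Matrix (Fin n) (Fin n) R] Matrix (Fin n) (Fin n) R where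
  toFun v := Matrix.of fun i j => if j = 0 then v i else 0
  map_add' v w := by
    ext i j
    by_cases h : j = (0 : Fin n) <;> simp [h]
  map_smul' A v := by
    ext i j
    show _ = (A * Matrix.of fun i j => if j = 0 then v i else 0) i j
    by_cases h : j = 0 <;>
      simp [h, Matrix.mul_apply, matrix_smul_apply, smul_eq_mul]

theorem colProj_colIncl : (colProj (R := R) (n := n)).comp colIncl = LinearMap.id := by
  ext v
  simp [colProj, colIncl]
  exact (if_pos rfl : (if (0 : Fin n) = 0 then v _ else 0) = v _)

theorem colFinite : Module.Finite (Matrix (Fin n) (Fin n) R) (Fin n → R) :=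
  finite_of_split colProj colIncl colProj_colIncl

theorem colProjective : Module.Projective (Matrix (Fin n) (Fin n) R) (Fin n → R) :=
  Module.Projective.of_split colIncl colProj colProj_colIncl

theorem matFinite (P : Type u) [AddCommGroup P] [Module R P] [Module.Finite R P]
    [Module.Projective R P] :
    Module.Finite (Matrix (Fin n) (Fin n) R) (Fin n → P) ∧
      Module.Projective (Matrix (Fin n) (Fin n) R) (Fin n → P) := by
  obtain ⟨k, π, σ, h⟩ := exists_split (R := R) P
  haveI h1 : Module.Finite (Matrix (Fin n) (Fin n) R) (Fin n → R) := colFinite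
  haveI h2 : Module.Projective (Matrix (Fin n) (Fin n) R) (Fin n → R) := colProjective
  haveI h3 : Module.Finite (Matrix (Fin n) (Fin n) R) (Fin k → (Fin n → R)) :=
    Module.Finite.pi
  haveI h4 : Module.Projective (Matrix (Fin n) (Fin n) R) (Fin k → (Fin n → R)) :=
    projective_pi _
  haveI h5 : Module.Finite (Matrix (Fin n) (Fin n) R) (Fin n → (Fin k → R)) :=
    Module.Finite.equiv (swapEquiv k).symm
  haveI h6 : Module.Projective (Matrix (Fin n) (Fin n) R) (Fin n → (Fin k → R)) :=
    Module.Projective.of_equiv (swapEquiv k).symm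
  have hc : (matMap π).comp (matMap σ) =
      (LinearMap.id : (Fin n → P) →ₗ[Matrix (Fin n) (Fin n) R] (Fin n → P)) := by
    refine LinearMap.ext fun v => funext fun i => ?_
    have := LinearMap.congr_fun h (v i)
    simpa [matMap] using this
  exact ⟨finite_of_split (matMap π) (matMap σ) hc,
    Module.Projective.of_split (matMap σ) (matMap π) hc⟩

end MatSide

end K0Morita
namespace K0Morita

open Matrix

section ESide

variable {R : Type u} [Ring R] {n : ℕ} [NeZero n]

/-- The matrix `r·e₁₁ ∈ Mₙ(R)`. -/
def eS (R : Type u) [Ring R] (n : ℕ) [NeZero n] (r : R) : Matrix (Fin n) (Fin n) R :=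
  Matrix.single 0 0 r

theorem eS_mul (r s : R) : eS R n r * eS R n s = eS R n (r * s) :=
  Matrix.single_mul_single_same r 0 0 0 s

theorem eS_add (r s : R) : eS R n r + eS R n s = eS R n (r + s) :=
  (Matrix.single_add 0 0 r s).symm

theorem eS_zero : eS R n 0 = 0 := Matrix.single_zero 0 0

variable (R n) in
/-- The additive subgroup `e₁₁ • Q` of an `Mₙ(R)`-module `Q`. -/
def ESub (Q : Type u) [AddCommGroup Q] [Module (Matrix (Fin n) (Fin n) R) Q] :
    AddSubgroup Q where
  carrier := {q | eS R n 1 • q = q}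
  add_mem' := by
    intro a b ha hb
    simp only [Set.mem_setOf_eq] at *
    rw [smul_add, ha, hb]
  zero_mem' := smul_zero _
  neg_mem' := by
    intro a ha
    simp only [Set.mem_setOf_eq] at *
    rw [smul_neg, ha]

variable (R n) in
/-- `e₁₁ • Q`, as a type. -/
abbrev E (Q : Type u) [AddCommGroup Q] [Module (Matrix (Fin n) (Fin n) R) Q] : Type u :=
  ↥(ESub R n Q)

variable {Q : Type u} [AddCommGroup Q] [Module (Matrix (Fin n) (Fin n) R) Q]

theorem E.prop (q : E R n Q) : eS R n 1 • (q : Q) = (q : Q) := q.2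

theorem E.mem_iff (q : Q) : q ∈ ESub R n Q ↔ eS R n 1 • q = q := Iff.rfl

instance : SMul R (E R n Q) :=
  ⟨fun r q => ⟨eS R n r • (q : Q), by
    rw [E.mem_iff, smul_smul, eS_mul, one_mul]⟩⟩

theorem E.smul_coe (r : R) (q : E R n Q) :
    ((r • q : E R n Q) : Q) = eS R n r • (q : Q) := rfl

theorem E.coe_add (a b : E R n Q) : ((a + b : E R n Q) : Q) = (a : Q) + (b : Q) := rfl

theorem E.ext' {a b : E R n Q} (h : (a : Q) = (b : Q)) : a = b := Subtype.ext h

instance : Module R (E R n Q) where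
  one_smul q := E.ext' (by rw [E.smul_coe]; exact E.prop q)
  mul_smul r s q := E.ext' (by
    rw [E.smul_coe, E.smul_coe, E.smul_coe, smul_smul, eS_mul])
  smul_zero r := E.ext' (by
    rw [E.smul_coe]
    show eS R n r • (0 : Q) = (0 : Q)
    rw [smul_zero])
  smul_add r a b := E.ext' (by
    rw [E.smul_coe, E.coe_add, E.coe_add, E.smul_coe, E.smul_coe, smul_add])
  add_smul r s q := E.ext' (by
    rw [E.smul_coe, E.coe_add, E.smul_coe, E.smul_coe, ← eS_add, add_smul])
  zero_smul q := E.ext' (by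
    rw [E.smul_coe, eS_zero]
    show (0 : Matrix (Fin n) (Fin n) R) • (q : Q) = (0 : Q)
    rw [zero_smul])

variable {Q' Q'' : Type u} [AddCommGroup Q'] [Module (Matrix (Fin n) (Fin n) R) Q']
  [AddCommGroup Q''] [Module (Matrix (Fin n) (Fin n) R) Q'']

/-- Functoriality of `Q ↦ e₁₁Q`. -/
def eMap (f : Q →ₗ[Matrix (Fin n) (Fin n) R] Q') : E R n Q →ₗ[R] E R n Q' where
  toFun q := ⟨f (q : Q), by
    rw [E.mem_iff, ← f.map_smul, E.prop q]⟩
  map_add' a b := E.ext' (by simp [E.coe_add])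
  map_smul' r q := E.ext' (by
    show f ((r • q : E R n Q) : Q) = ((r • _ : E R n Q') : Q')
    rw [E.smul_coe, E.smul_coe, f.map_smul])

theorem eMap_coe (f : Q →ₗ[Matrix (Fin n) (Fin n) R] Q') (q : E R n Q) :
    ((eMap f q : E R n Q') : Q') = f (q : Q) := rfl

/-- `Q ↦ e₁₁Q` on linear equivalences. -/
def eEquiv (e : Q ≃ₗ[Matrix (Fin n) (Fin n) R] Q') : E R n Q ≃ₗ[R] E R n Q' :=
  LinearEquiv.ofLinear (eMap e.toLinearMap) (eMap e.symm.toLinearMap)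
    (by
      refine LinearMap.ext fun q => E.ext' ?_
      show e (e.symm (q : Q')) = (q : Q')
      simp)
    (by
      refine LinearMap.ext fun q => E.ext' ?_
      show e.symm (e (q : Q)) = (q : Q)
      simp)

/-- `e₁₁(Q × Q') ≅ e₁₁Q × e₁₁Q'` as `R`-modules. -/
def eProd : E R n (Q × Q') ≃ₗ[R] (E R n Q × E R n Q') where
  toFun q := (⟨(q : Q × Q').1, by
      have h := E.prop q; rw [Prod.ext_iff] at h; exact h.1⟩,
    ⟨(q : Q × Q').2, by
      have h := E.prop q; rw [Prod.ext_iff] at h; exact h.2⟩)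
  invFun p := ⟨((p.1 : Q), (p.2 : Q')), by
    rw [E.mem_iff, Prod.smul_mk, E.prop p.1, E.prop p.2]⟩
  left_inv q := E.ext' rfl
  right_inv p := Prod.ext (E.ext' rfl) (E.ext' rfl)
  map_add' a b := Prod.ext (E.ext' rfl) (E.ext' rfl)
  map_smul' r q := Prod.ext (E.ext' (by rfl)) (E.ext' (by rfl))

/-- `e₁₁(∏ Qᵢ) ≅ ∏ e₁₁Qᵢ` as `R`-modules. -/
def ePi {ι : Type} (A : ι → Type u) [∀ i, AddCommGroup (A i)]
    [∀ i, Module (Matrix (Fin n) (Fin n) R) (A i)] :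
    E R n (∀ i, A i) ≃ₗ[R] (∀ i, E R n (A i)) where
  toFun q := fun i => ⟨(q : ∀ i, A i) i, congrFun (E.prop q) i⟩
  invFun p := ⟨fun i => (p i : A i), by
    rw [E.mem_iff]
    funext i
    show (eS R n 1 • fun i => (p i : A i)) i = (p i : A i)
    rw [Pi.smul_apply, E.prop (p i)]⟩
  left_inv q := E.ext' rfl
  right_inv p := funext fun i => E.ext' rfl
  map_add' a b := funext fun i => E.ext' rfl
  map_smul' r q := funext fun i => E.ext' (by rfl)

theorem eS_one_mul_apply (q : Matrix (Fin n) (Fin n) R) (i j : Fin n) :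
    (eS R n 1 * q) i j = if i = 0 then q 0 j else 0 := by
  simp [eS, Matrix.mul_apply, Matrix.single, ite_and, eq_comm]

/-- `e₁₁ Mₙ(R)` (the first row) is isomorphic to `Rⁿ` as an `R`-module. -/
def eMatEquiv : E R n (Matrix (Fin n) (Fin n) R) ≃ₗ[R] (Fin n → R) := by
  refine LinearEquiv.ofLinear
    { toFun := fun q => fun j => (q : Matrix (Fin n) (Fin n) R) 0 j
      map_add' := fun a b => rfl
      map_smul' := fun r q => by
        funext j
        show ((r • q : E R n _) : Matrix (Fin n) (Fin n) R) 0 j = r * _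
        rw [E.smul_coe]
        show (eS R n r * (q : Matrix (Fin n) (Fin n) R)) 0 j = _
        simp [eS, Matrix.mul_apply, Matrix.single, ite_and, eq_comm] }
    { toFun := fun v => ⟨Matrix.of fun i j => if i = 0 then v j else 0, by
        rw [E.mem_iff]
        show eS R n 1 * _ = _
        ext i j
        rw [eS_one_mul_apply]
        simp⟩
      map_add' := fun v w => E.ext' (by
        show Matrix.of _ = (Matrix.of _ : Matrix (Fin n) (Fin n) R) + Matrix.of _
        ext i j
        by_cases h : i = (0 : Fin n) <;> simp [h])
      map_smul' := fun r v => E.ext' (by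
        rw [E.smul_coe]
        show Matrix.of _ = eS R n r * Matrix.of _
        ext i j
        by_cases h : i = (0 : Fin n) <;>
          simp [h, eS, Matrix.mul_apply, Matrix.single, ite_and, eq_comm]) }
    ?_ ?_
  · refine LinearMap.ext fun v => ?_
    funext j
    show (Matrix.of fun i j => if i = (0 : Fin n) then v j else 0) 0 j = v j
    simp
  · refine LinearMap.ext fun q => E.ext' ?_
    show Matrix.of _ = (q : Matrix (Fin n) (Fin n) R)
    have h := E.prop q
    ext i j
    conv_rhs => rw [← h]
    show _ = (eS R n 1 * (q : Matrix (Fin n) (Fin n) R)) i j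
    rw [eS_one_mul_apply]
    simp
    rfl

/-- `e₁₁Q` is finitely generated projective over `R` when `Q` is so over `Mₙ(R)`. -/
theorem eFinProj (Q : Type u) [AddCommGroup Q] [Module (Matrix (Fin n) (Fin n) R) Q]
    [Module.Finite (Matrix (Fin n) (Fin n) R) Q]
    [Module.Projective (Matrix (Fin n) (Fin n) R) Q] :
    Module.Finite R (E R n Q) ∧ Module.Projective R (E R n Q) := by
  obtain ⟨k, π, σ, h⟩ := exists_split (R := Matrix (Fin n) (Fin n) R) Q
  have base : E R n (Fin k → Matrix (Fin n) (Fin n) R) ≃ₗ[R] (Fin k → (Fin n → R)) :=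
    (ePi _).trans (LinearEquiv.piCongrRight fun _ => eMatEquiv)
  haveI : Module.Finite R (E R n (Fin k → Matrix (Fin n) (Fin n) R)) :=
    Module.Finite.equiv base.symm
  haveI : Module.Projective R (E R n (Fin k → Matrix (Fin n) (Fin n) R)) :=
    Module.Projective.of_equiv base.symm
  have hc : (eMap π).comp (eMap σ) = (LinearMap.id : E R n Q →ₗ[R] E R n Q) := by
    refine LinearMap.ext fun q => E.ext' ?_
    have := LinearMap.congr_fun h (q : Q)
    simpa [eMap_coe] using this
  exact ⟨finite_of_split (eMap π) (eMap σ) hc,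
    Module.Projective.of_split (eMap σ) (eMap π) hc⟩

end ESide

end K0Morita
namespace K0Morita

open Matrix

section UnitCounit

variable {R : Type u} [Ring R] {n : ℕ} [NeZero n]

theorem eS_smul_pi_apply {P : Type u} [AddCommGroup P] [Module R P]
    (r : R) (v : Fin n → P) (i : Fin n) :
    (eS R n r • v) i = if i = 0 then r • v 0 else 0 := by
  show (∑ j, eS R n r i j • v j) = _
  simp [eS, Matrix.single, ite_and, ite_smul, eq_comm]

/-- The unit of the equivalence: `e₁₁ • Pⁿ ≅ P`. -/
noncomputable def unitEquiv (P : Type u) [AddCommGroup P] [Module R P] :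
    E R n (Fin n → P) ≃ₗ[R] P := by
  refine LinearEquiv.ofBijective
    { toFun := fun q : E R n (Fin n → P) => (q : Fin n → P) 0
      map_add' := fun a b => rfl
      map_smul' := fun r q => by
        show ((r • q : E R n (Fin n → P)) : Fin n → P) 0 = r • (q : Fin n → P) 0
        rw [E.smul_coe, eS_smul_pi_apply]
        simp }
    ⟨?_, ?_⟩
  · intro a b hab
    refine E.ext' (funext fun i => ?_)
    have ha := congrFun (E.prop a) i
    have hb := congrFun (E.prop b) i
    rw [eS_smul_pi_apply] at ha hb
    have hab' : (a : Fin n → P) 0 = (b : Fin n → P) 0 := hab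
    rw [← ha, ← hb]
    by_cases h : i = (0 : Fin n) <;> simp [h, one_smul, hab']
  · intro p
    refine ⟨⟨Pi.single (0 : Fin n) p, ?_⟩, ?_⟩
    · rw [E.mem_iff]
      funext i
      rw [eS_smul_pi_apply]
      by_cases h : i = (0 : Fin n) <;> simp [h, Pi.single_apply]
    · exact Pi.single_eq_same (M := fun _ : Fin n => P) 0 p

/-- The row matrix `e_{0i}`. -/
def f01 (R : Type u) [Ring R] (n : ℕ) [NeZero n] (i : Fin n) : Matrix (Fin n) (Fin n) R :=
  Matrix.single 0 i 1

/-- The column matrix `e_{i0}`. -/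
def f10 (R : Type u) [Ring R] (n : ℕ) [NeZero n] (i : Fin n) : Matrix (Fin n) (Fin n) R :=
  Matrix.single i 0 1

theorem eS_mul_f01 (r : R) (j : Fin n) :
    eS R n r * f01 R n j = Matrix.single 0 j r := by
  rw [eS, f01, Matrix.single_mul_single_same, mul_one]

theorem f10_mul_f01_same (i : Fin n) : f10 R n i * f01 R n i = Matrix.single i i 1 := by
  rw [f10, f01, Matrix.single_mul_single_same, one_mul]

theorem f01_mul_f10_same (i : Fin n) : f01 R n i * f10 R n i = eS R n 1 := by
  rw [f01, f10, Matrix.single_mul_single_same, one_mul, eS]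

theorem f01_mul_f10_ne {i j : Fin n} (h : i ≠ j) : f01 R n i * f10 R n j = 0 := by
  rw [f01, f10]
  exact Matrix.single_mul_single_of_ne _ _ _ _ h _

theorem f01_mul (A : Matrix (Fin n) (Fin n) R) (i : Fin n) :
    f01 R n i * A = ∑ j, Matrix.single (0 : Fin n) j (A i j) := by
  ext p q
  rw [Matrix.sum_apply]
  by_cases h : p = (0 : Fin n) <;>
    simp [h, f01, Matrix.mul_apply, Matrix.single, ite_and, eq_comm]

theorem sum_diag_one : (∑ i, Matrix.single i i (1 : R)) = (1 : Matrix (Fin n) (Fin n) R) := by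
  ext p q
  rw [Matrix.sum_apply]
  by_cases h : p = q <;>
    simp [h, Matrix.single, Matrix.one_apply, ite_and, eq_comm]

variable {Q : Type u} [AddCommGroup Q] [Module (Matrix (Fin n) (Fin n) R) Q]

variable (R n) in
/-- The `i`-th component of the counit. -/
def counitAux (q : Q) (i : Fin n) : E R n Q :=
  ⟨f01 R n i • q, by
    rw [E.mem_iff, smul_smul]
    show (Matrix.single 0 0 (1:R) * Matrix.single 0 i 1) • q = _
    rw [Matrix.single_mul_single_same, one_mul]
    rfl⟩

theorem counitAux_coe (q : Q) (i : Fin n) : (counitAux R n q i : Q) = f01 R n i • q := rfl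

theorem E.coe_sum {ι : Type} (s : Finset ι) (x : ι → E R n Q) :
    ((∑ j ∈ s, x j : E R n Q) : Q) = ∑ j ∈ s, (x j : Q) :=
  map_sum (ESub R n Q).subtype x s

variable (R n) in
/-- The counit `Q ≅ (e₁₁Q)ⁿ`, as a linear map. -/
def counitMap : Q →ₗ[Matrix (Fin n) (Fin n) R] (Fin n → E R n Q) where
  toFun q := counitAux R n q
  map_add' a b := funext fun i => E.ext' (by
    show f01 R n i • (a + b) = _
    rw [smul_add]
    rfl)
  map_smul' A q := by
    funext i
    refine E.ext' ?_
    show f01 R n i • (A • q) = (((A • counitAux R n q : Fin n → E R n Q)) i : Q)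
    rw [matrix_smul_apply, E.coe_sum]
    simp only [E.smul_coe, counitAux_coe, smul_smul, eS_mul_f01]
    rw [← Finset.sum_smul, ← f01_mul A i]

variable (R n) in
/-- Inverse of the counit, as a raw function. -/
def counitInv (v : Fin n → E R n Q) : Q := ∑ i, f10 R n i • (v i : Q)

theorem counitInv_counit (q : Q) : counitInv R n (counitMap R n q) = q := by
  unfold counitInv
  have : ∀ i : Fin n, f10 R n i • ((counitMap R n q i : E R n Q) : Q) =
      Matrix.single i i (1 : R) • q := by
    intro i
    show f10 R n i • (f01 R n i • q) = _
    rw [smul_smul, f10_mul_f01_same]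
  rw [Finset.sum_congr rfl fun i _ => this i, ← Finset.sum_smul, sum_diag_one, one_smul]

theorem counit_counitInv (v : Fin n → E R n Q) : counitMap R n (counitInv R n v) = v := by
  funext i
  refine E.ext' ?_
  show f01 R n i • counitInv R n v = (v i : Q)
  unfold counitInv
  rw [Finset.smul_sum]
  have : ∀ j : Fin n, f01 R n i • (f10 R n j • ((v j : Q))) =
      if i = j then (v i : Q) else 0 := by
    intro j
    rw [smul_smul]
    by_cases h : i = j
    · subst h
      rw [f01_mul_f10_same, if_pos rfl, E.prop]
    · rw [f01_mul_f10_ne h, if_neg h, zero_smul]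
  rw [Finset.sum_congr rfl fun j _ => this j]
  simp

variable (R n) in
/-- The counit `Q ≅ (e₁₁Q)ⁿ` as an `Mₙ(R)`-linear equivalence. -/
noncomputable def counitEquiv : Q ≃ₗ[Matrix (Fin n) (Fin n) R] (Fin n → E R n Q) :=
  LinearEquiv.ofBijective (counitMap R n)
    ⟨Function.LeftInverse.injective (g := counitInv R n) (counitInv_counit),
     Function.RightInverse.surjective (g := counitInv R n) (counit_counitInv)⟩

end UnitCounit

end K0Morita
namespace K0Morita

open Matrix

section Assembly

variable (R : Type u) [Ring R] (n : ℕ) [NeZero n]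

/-- The functor `P ↦ Pⁿ` on bundled modules. -/
noncomputable def matFG (P : FGProj R) : FGProj (Matrix (Fin n) (Fin n) R) :=
  haveI h1 := (matFinite (R := R) (n := n) (P : Type u)).1
  haveI h2 := (matFinite (R := R) (n := n) (P : Type u)).2
  ⟨Fin n → (P : Type u)⟩

/-- The functor `Q ↦ e₁₁Q` on bundled modules. -/
noncomputable def eFG (Q : FGProj (Matrix (Fin n) (Fin n) R)) : FGProj R :=
  haveI h1 := (eFinProj (R := R) (n := n) (Q : Type u)).1
  haveI h2 := (eFinProj (R := R) (n := n) (Q : Type u)).2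
  ⟨E R n (Q : Type u)⟩

/-- The induced map `K₀(R) → K₀(Mₙ(R))`. -/
noncomputable def phi : K0 R →+ K0 (Matrix (Fin n) (Fin n) R) := by
  refine QuotientAddGroup.lift (K0Rels R)
    (FreeAbelianGroup.lift fun P : FGProj R => K0.mk (matFG R n P)) ?_
  have hle : K0Rels R ≤
      (FreeAbelianGroup.lift fun P : FGProj R => K0.mk (matFG R n P)).ker := by
    refine (AddSubgroup.closure_le _).mpr ?_
    rintro x ⟨A, B, C, ⟨e⟩, rfl⟩
    have key : K0.mk (matFG R n A) + K0.mk (matFG R n B) = K0.mk (matFG R n C) :=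
      K0.mk_add _ _ _ (((matProd (A : Type u) (B : Type u)).symm).trans (matEquiv e))
    simp only [SetLike.mem_coe, AddMonoidHom.mem_ker, map_sub, map_add,
      FreeAbelianGroup.lift_apply_of]
    rw [key, sub_self]
  exact hle

/-- The induced map `K₀(Mₙ(R)) → K₀(R)`. -/
noncomputable def psi : K0 (Matrix (Fin n) (Fin n) R) →+ K0 R := by
  refine QuotientAddGroup.lift (K0Rels (Matrix (Fin n) (Fin n) R))
    (FreeAbelianGroup.lift fun Q : FGProj (Matrix (Fin n) (Fin n) R) =>
      K0.mk (eFG R n Q)) ?_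
  have hle : K0Rels (Matrix (Fin n) (Fin n) R) ≤
      (FreeAbelianGroup.lift fun Q : FGProj (Matrix (Fin n) (Fin n) R) =>
        K0.mk (eFG R n Q)).ker := by
    refine (AddSubgroup.closure_le _).mpr ?_
    rintro x ⟨A, B, C, ⟨e⟩, rfl⟩
    have key : K0.mk (eFG R n A) + K0.mk (eFG R n B) = K0.mk (eFG R n C) :=
      K0.mk_add _ _ _ ((eProd (Q := (A : Type u)) (Q' := (B : Type u))).symm.trans (eEquiv e))
    simp only [SetLike.mem_coe, AddMonoidHom.mem_ker, map_sub, map_add,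
      FreeAbelianGroup.lift_apply_of]
    rw [key, sub_self]
  exact hle

theorem phi_mk (P : FGProj R) : phi R n (K0.mk P) = K0.mk (matFG R n P) := by
  show QuotientAddGroup.lift _ _ _ (QuotientAddGroup.mk _) = _
  rw [QuotientAddGroup.lift_mk']
  exact FreeAbelianGroup.lift_apply_of _ _

theorem psi_mk (Q : FGProj (Matrix (Fin n) (Fin n) R)) :
    psi R n (K0.mk Q) = K0.mk (eFG R n Q) := by
  show QuotientAddGroup.lift _ _ _ (QuotientAddGroup.mk _) = _
  rw [QuotientAddGroup.lift_mk']
  exact FreeAbelianGroup.lift_apply_of _ _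

theorem psi_phi : (psi R n).comp (phi R n) = AddMonoidHom.id (K0 R) := by
  refine QuotientAddGroup.addMonoidHom_ext _ ?_
  refine FreeAbelianGroup.lift_ext _ _ fun P => ?_
  show psi R n (phi R n (K0.mk P)) = K0.mk P
  rw [phi_mk, psi_mk]
  exact K0.mk_congr _ _ (unitEquiv (P : Type u))

theorem phi_psi : (phi R n).comp (psi R n) = AddMonoidHom.id (K0 (Matrix (Fin n) (Fin n) R)) := by
  refine QuotientAddGroup.addMonoidHom_ext _ ?_
  refine FreeAbelianGroup.lift_ext _ _ fun Q => ?_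
  show phi R n (psi R n (K0.mk Q)) = K0.mk Q
  rw [psi_mk, phi_mk]
  exact K0.mk_congr _ _ (counitEquiv R n (Q := (Q : Type u))).symm

end Assembly

end K0Morita

/-- Morita equivalence for `K₀`: for any ring `R` and `n ≥ 1`, tensoring with the
`(Mₙ(R), R)`-bimodule `Rⁿ` (sending an `R`-module `P` to the `Mₙ(R)`-module `Pⁿ`)
induces an isomorphism `K₀(R) ≅ K₀(Mₙ(R))`. -/
theorem k0_morita (R : Type u) [Ring R] (n : ℕ) (hn : 1 ≤ n) :
    ∃ e : K0 R ≃+ K0 (Matrix (Fin n) (Fin n) R),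
      ∀ (P : FGProj R) (Q : FGProj (Matrix (Fin n) (Fin n) R)),
        Nonempty ((Q : Type u) ≃ₗ[Matrix (Fin n) (Fin n) R] (Fin n → (P : Type u))) →
        e (K0.mk P) = K0.mk Q := by
  haveI : NeZero n := ⟨by omega⟩
  refine ⟨AddMonoidHom.toAddEquiv (K0Morita.phi R n) (K0Morita.psi R n)
    (K0Morita.psi_phi R n) (K0Morita.phi_psi R n), ?_⟩
  rintro P Q ⟨e⟩
  show K0Morita.phi R n (K0.mk P) = K0.mk Q
  rw [K0Morita.phi_mk]
  exact (K0Morita.K0.mk_congr Q (K0Morita.matFG R n P) e).symm
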